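/- arXiv:1410.3010 — 2 statements merged into one kernel-verified Lean document; each statement's English description precedes it below -/
import Mathlib

section
/- Let v, w, x, y be 0/1 vectors of length m with exactly t ones each, with v < w < min{x, y} in binary order. If c1(v,w) = c1(v,x), then c1(v,y) ≠ c1(w,x). -/
/-- Binary order on 0/1 vectors of length `m` (coordinate 0 most significant). -/
def binLT {m : ℕ} (v w : Fin m → Bool) : Prop :=
  ∃ i : Fin m, v i = false ∧ w i = true ∧ ∀ j < i, v j = w j

/-- `c1Spec v w i` : `i` is the minimum index with `v i = 0` and `w i = 1`. -/
def c1Spec {m : ℕ} (v w : Fin m → Bool) (i : Fin m) : Prop :=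
  v i = false ∧ w i = true ∧ ∀ j < i, ¬(v j = false ∧ w j = true)

lemma agree_before {m : ℕ} {v w : Fin m → Bool} {i : Fin m}
    (h : binLT v w) (hs : c1Spec v w i) : ∀ j < i, v j = w j := by
  obtain ⟨i', h1, h2, h3⟩ := h
  have hle : i ≤ i' := not_lt.mp (fun hlt => hs.2.2 i' hlt ⟨h1, h2⟩)
  exact fun j hj => h3 j (lt_of_lt_of_le hj hle)

theorem stmt_1 {m t : ℕ} (v w x y : Fin m → Bool)
    (hv : (Finset.univ.filter fun i => v i = true).card = t)
    (hw : (Finset.univ.filter fun i => w i = true).card = t)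
    (hx : (Finset.univ.filter fun i => x i = true).card = t)
    (hy : (Finset.univ.filter fun i => y i = true).card = t)
    (hvw : binLT v w) (hwx : binLT w x) (hwy : binLT w y)
    (i i₁ i₂ : Fin m)
    (hvw1 : c1Spec v w i) (hvx1 : c1Spec v x i)
    (hvy1 : c1Spec v y i₁) (hwx1 : c1Spec w x i₂) :
    i₁ ≠ i₂ := by
  intro heq
  subst heq
  have hvwa : ∀ j < i, v j = w j := agree_before hvw hvw1
  -- first, i < i₁
  have hii : i < i₁ := by
    rcases lt_trichotomy i₁ i with h | h | h
    · exact (hvx1.2.2 i₁ h ⟨(hvwa i₁ h).trans hwx1.1, hwx1.2.1⟩).elim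
    · rw [h] at hwx1
      exact absurd hvw1.2.1 (by simp [hwx1.1])
    · exact h
  -- y i = false
  have hyi : y i = false := by
    by_contra h
    exact hvy1.2.2 i hii ⟨hvw1.1, by simpa using h⟩
  -- contradiction with binLT w y
  obtain ⟨j, hj1, hj2, hj3⟩ := hwy
  rcases lt_trichotomy j i with h | h | h
  · exact hvy1.2.2 j (h.trans hii) ⟨(hvwa j h).trans hj1, hj2⟩
  · rw [h] at hj1; exact absurd hvw1.2.1 (by simp [hj1])
  · have := hj3 i h
    rw [hvw1.2.1, hyi] at this
    exact absurd this (by simp)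
end

section
/- Let i < i' be positive integers and let v, w, x, y be 0/1 vectors of length m with v < w < min{x,y} in binary order. If the first differing coordinate of v and w is i, the first differing coordinate of v and x is i, and the first differing coordinate of v and y is i', then it is impossible that the first differing coordinate of w and x is also i' — concretely, assuming all four conditions leads to w > y, contradicting w < y. -/
/-- `i` is the first coordinate where `v` and `w` differ. -/
def firstDiff {m : ℕ} (v w : Fin m → Bool) (i : Fin m) : Prop :=
  v i ≠ w i ∧ ∀ j < i, v j = w j

theorem stmt_15 {m : ℕ} (v w x y : Fin m → Bool) (i i' : Fin m) (hii' : i < i')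
    (hvw : binLT v w) (hwx : binLT w x) (hwy : binLT w y)
    (h1 : firstDiff v w i) (h2 : firstDiff v x i) (h3 : firstDiff v y i') :
    ¬ firstDiff w x i' := by
  intro _
  -- The binLT witness for v < w must be i itself.
  obtain ⟨j, hvj, hwj, hpre⟩ := hvw
  have hji : j = i := by
    rcases lt_trichotomy j i with h | h | h
    · exact absurd (h1.2 j h) (by rw [hvj, hwj]; simp)
    · exact h
    · exact absurd (hpre i h) (by intro he; exact h1.1 he)
  subst hji
  -- So v j = false, w j = true; and y j = v j = false since j < i'.
  have hyj : y j = false := by rw [← h3.2 j hii', hvj]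
  -- Now derive a contradiction from w < y.
  obtain ⟨k, hwk, hyk, hpre'⟩ := hwy
  rcases lt_trichotomy k j with h | h | h
  · -- v k = w k = false but v k = y k = true
    have h1' : v k = false := by rw [h1.2 k h, hwk]
    have h2' : v k = true := by rw [h3.2 k (h.trans hii'), hyk]
    simp [h1'] at h2'
  · subst h; rw [hwj] at hwk; exact Bool.noConfusion hwk
  · have := hpre' j h; rw [hwj, hyj] at this; exact Bool.noConfusion this
end
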